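/- Let 𝒯 be a signed permutation matrix. For any matrices A, B (with B having positive entries) of matching sizes, ((A𝒯ᵀ) ⊘ (B|𝒯ᵀ|))𝒯 = A ⊘ B, where ⊘ denotes entrywise (Hadamard) division and |𝒯ᵀ| is the entrywise absolute value. -/

import Mathlib

open Matrix

/-- Key algebraic step in the Adam-invariance proof: for a signed permutation
matrix `𝒯` and `B` with positive entries,
`((A𝒯ᵀ) ⊘ (B|𝒯ᵀ|)) 𝒯 = A ⊘ B` (entrywise division, entrywise absolute value). -/
theorem hadamard_div_signedPerm {m n : ℕ}
    (A B : Matrix (Fin m) (Fin n) ℝ) (hB : ∀ i j, 0 < B i j)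
    (𝒯 : Matrix (Fin n) (Fin n) ℝ)
    (h𝒯 : ∃ (σ : Equiv.Perm (Fin n)) (ε : Fin n → ℝ),
      (∀ i, ε i = 1 ∨ ε i = -1) ∧ 𝒯 = σ.permMatrix ℝ * Matrix.diagonal ε) :
    (Matrix.of fun i j =>
        (A * 𝒯ᵀ) i j / ((B * 𝒯ᵀ.map (fun t => |t|)) i j)) * 𝒯
      = Matrix.of (fun i j => A i j / B i j) := by
  obtain ⟨σ, ε, hε, rfl⟩ := h𝒯
  have hT : ∀ i j, (σ.permMatrix ℝ * Matrix.diagonal ε) i j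
      = if σ i = j then ε j else 0 := by
    intro i j
    simp [Matrix.mul_apply, Matrix.diagonal, Equiv.Perm.permMatrix,
      PEquiv.toMatrix, Equiv.toPEquiv, Finset.sum_ite_eq, eq_comm]
  have hε1 : ∀ i, |ε i| = 1 := by
    intro i; rcases hε i with h | h <;> simp [h]
  have hε2 : ∀ i, ε i * ε i = 1 := by
    intro i; rcases hε i with h | h <;> simp [h]
  ext i j
  have hAT : ∀ k, (A * (σ.permMatrix ℝ * Matrix.diagonal ε)ᵀ) i k
      = A i (σ k) * ε (σ k) := by
    intro k
    rw [Matrix.mul_apply]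
    rw [Finset.sum_eq_single (σ k)]
    · simp only [Matrix.transpose_apply, hT, eq_self_iff_true, if_true]
    · intro b _ hb
      simp only [Matrix.transpose_apply, hT, if_neg (Ne.symm hb), mul_zero]
    · simp
  have hBT : ∀ k, (B * (σ.permMatrix ℝ * Matrix.diagonal ε)ᵀ.map (fun t => |t|)) i k
      = B i (σ k) := by
    intro k
    rw [Matrix.mul_apply]
    rw [Finset.sum_eq_single (σ k)]
    · simp only [Matrix.map_apply, Matrix.transpose_apply, hT, eq_self_iff_true, if_true, hε1, mul_one]
    · intro b _ hb
      simp only [Matrix.map_apply, Matrix.transpose_apply, hT, if_neg (Ne.symm hb),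
        abs_zero, mul_zero]
    · simp
  rw [Matrix.mul_apply]
  rw [Finset.sum_eq_single (σ.symm j)]
  · simp only [Matrix.of_apply, hAT, hBT, hT, Equiv.apply_symm_apply, if_pos rfl]
    field_simp
    rw [if_pos trivial, mul_assoc, hε2, mul_one]
  · intro b _ hb
    have : σ b ≠ j := fun h => hb (by simp [← h])
    simp [hT, this]
  · simp
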